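/- arXiv:2105.00860 — 2 statements merged into one kernel-verified Lean document; each statement's English description precedes it below -/
import Mathlib

section
/- Let G ∈ R^{p×p} be symmetric positive definite, partitioned conformably as blocks indexed by a subset S ⊆ {1,…,p} and its complement Sᶜ. For a diagonal penalty matrix Λ = diag(Λ_S, Λ_{Sᶜ}) with positive diagonal entries, as Λ_S → 0 and all diagonal entries of Λ_{Sᶜ} → ∞, the inverse (G + Λ)⁻¹ converges to the block matrix [[(G_{SS})⁻¹, 0], [0, 0]], where G_{SS} is the principal submatrix of G indexed by S. -/
open Matrix Filter

private lemma tendsto_matrix_mul' {X : Type*} {l : Filter X} {m n p : Type*} [Fintype n]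
    {f : X → Matrix m n ℝ} {g : X → Matrix n p ℝ} {A : Matrix m n ℝ} {B : Matrix n p ℝ}
    (hf : Tendsto f l (nhds A)) (hg : Tendsto g l (nhds B)) :
    Tendsto (fun x => f x * g x) l (nhds (A * B)) := by
  have hc : Continuous fun q : Matrix m n ℝ × Matrix n p ℝ => q.1 * q.2 :=
    (continuous_fst).matrix_mul (continuous_snd)
  exact (hc.tendsto (A, B)).comp (hf.prodMk_nhds hg)

private lemma tendsto_matrix_inv' {X : Type*} {l : Filter X} {n : Type*} [Fintype n]
    [DecidableEq n] {f : X → Matrix n n ℝ} {A : Matrix n n ℝ}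
    (hf : Tendsto f l (nhds A)) (hA : A.det ≠ 0) :
    Tendsto (fun x => (f x)⁻¹) l (nhds A⁻¹) := by
  simp only [Matrix.inv_def, Ring.inverse_eq_inv]
  have hdet : Tendsto (fun x => (f x).det) l (nhds A.det) :=
    ((continuous_id.matrix_det).tendsto A).comp hf
  have hadj : Tendsto (fun x => (f x).adjugate) l (nhds A.adjugate) :=
    ((continuous_id.matrix_adjugate).tendsto A).comp hf
  exact (hdet.inv₀ hA).smul hadj

private lemma tendsto_fromBlocks' {X : Type*} {l : Filter X} {m n : Type*}
    {A : X → Matrix m m ℝ} {B : X → Matrix m n ℝ}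
    {C : X → Matrix n m ℝ} {D : X → Matrix n n ℝ}
    {A₀ : Matrix m m ℝ} {B₀ : Matrix m n ℝ} {C₀ : Matrix n m ℝ} {D₀ : Matrix n n ℝ}
    (hA : Tendsto A l (nhds A₀)) (hB : Tendsto B l (nhds B₀))
    (hC : Tendsto C l (nhds C₀)) (hD : Tendsto D l (nhds D₀)) :
    Tendsto (fun x => fromBlocks (A x) (B x) (C x) (D x)) l
      (nhds (fromBlocks A₀ B₀ C₀ D₀)) := by
  apply tendsto_pi_nhds.mpr
  intro i
  rw [tendsto_pi_nhds]
  intro j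
  rcases i with i | i <;> rcases j with j | j <;>
    simp only [fromBlocks_apply₁₁, fromBlocks_apply₁₂, fromBlocks_apply₂₁, fromBlocks_apply₂₂]
  · exact tendsto_pi_nhds.mp (tendsto_pi_nhds.mp hA i) j
  · exact tendsto_pi_nhds.mp (tendsto_pi_nhds.mp hB i) j
  · exact tendsto_pi_nhds.mp (tendsto_pi_nhds.mp hC i) j
  · exact tendsto_pi_nhds.mp (tendsto_pi_nhds.mp hD i) j

private lemma inv_entry_le' {n : Type*} [Fintype n] [DecidableEq n]
    {M : Matrix n n ℝ} (hM : IsUnit M.det) {c : ℝ} (hc : 0 < c)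
    (h : ∀ x : n → ℝ, c * (∑ k, x k ^ 2) ≤ x ⬝ᵥ M *ᵥ x) (i j : n) :
    |M⁻¹ j i| ≤ 1 / c := by
  set x : n → ℝ := M⁻¹ *ᵥ Pi.single i 1 with hx
  have hMx : M *ᵥ x = Pi.single i 1 := by
    rw [hx, mulVec_mulVec, Matrix.mul_nonsing_inv _ hM, one_mulVec]
  have hq : x ⬝ᵥ M *ᵥ x = x i := by rw [hMx, dotProduct_single, mul_one]
  have h1 : c * (∑ k, x k ^ 2) ≤ x i := hq ▸ h x
  have hii : x i ^ 2 ≤ ∑ k, x k ^ 2 :=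
    Finset.single_le_sum (fun k _ => sq_nonneg (x k)) (Finset.mem_univ i)
  have hjj : x j ^ 2 ≤ ∑ k, x k ^ 2 :=
    Finset.single_le_sum (fun k _ => sq_nonneg (x k)) (Finset.mem_univ j)
  have hsum : (0 : ℝ) ≤ ∑ k, x k ^ 2 :=
    Finset.sum_nonneg fun k _ => sq_nonneg (x k)
  have h2 : c * x i ^ 2 ≤ x i :=
    le_trans (mul_le_mul_of_nonneg_left hii hc.le) h1
  have hxi0 : 0 ≤ x i :=
    le_trans (mul_nonneg hc.le hsum) h1
  have hcu : c * (1 / c) = 1 := mul_one_div_cancel hc.ne'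
  have hxi : x i ≤ 1 / c := by
    rcases hxi0.eq_or_lt with h0 | h0
    · rw [← h0]; positivity
    · have hmul : (c * x i) * x i ≤ 1 * x i := by rw [one_mul]; nlinarith [h2]
      have hle : c * x i ≤ 1 := le_of_mul_le_mul_right hmul h0
      rw [le_div_iff₀ hc]
      nlinarith [hle]
  have hsq : x j ^ 2 ≤ (1 / c) ^ 2 := by
    have h3 : c * x j ^ 2 ≤ 1 / c :=
      le_trans (le_trans (mul_le_mul_of_nonneg_left hjj hc.le) h1) hxi
    nlinarith [h3, hcu, one_div_pos.mpr hc]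
  have habs : |x j| ≤ 1 / c := by
    rw [← Real.sqrt_sq_eq_abs]
    calc Real.sqrt (x j ^ 2) ≤ Real.sqrt ((1 / c) ^ 2) := Real.sqrt_le_sqrt hsq
    _ = 1 / c := Real.sqrt_sq (by positivity)
  have hxval : x j = M⁻¹ j i := by
    simp [hx]
  rwa [hxval] at habs

private lemma posDef_toBlocks₁₁' {m n : Type*} [Fintype m] [Fintype n]
    {G : Matrix (m ⊕ n) (m ⊕ n) ℝ} (hG : G.PosDef) : G.toBlocks₁₁.PosDef := by
  refine Matrix.PosDef.of_dotProduct_mulVec_pos (hG.isHermitian.submatrix Sum.inl) fun x hx => ?_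
  have hy : (Sum.elim x (0 : n → ℝ)) ≠ 0 := by
    intro h0
    apply hx
    ext i
    exact congrFun h0 (Sum.inl i)
  have := hG.dotProduct_mulVec_pos hy
  convert this using 1
  simp [dotProduct, Fintype.sum_sum_type, mulVec, toBlocks₁₁, Finset.mul_sum, star_trivial]

/-- For a symmetric positive definite matrix `G` partitioned in blocks
over `S ⊕ Sᶜ`, as the diagonal penalties on `S` tend to `0` and those on `Sᶜ`
tend to `∞`, the inverse `(G + Λ)⁻¹` converges to `[[(G_{SS})⁻¹, 0], [0, 0]]`. -/
theorem blockwise_penalty_limit {s t : ℕ}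
    (G : Matrix (Fin s ⊕ Fin t) (Fin s ⊕ Fin t) ℝ) (hG : G.PosDef)
    (ΛS : ℕ → Fin s → ℝ) (ΛC : ℕ → Fin t → ℝ)
    (hposS : ∀ n i, 0 < ΛS n i) (hposC : ∀ n j, 0 < ΛC n j)
    (hS : ∀ i, Tendsto (fun n => ΛS n i) atTop (nhds 0))
    (hC : ∀ j, Tendsto (fun n => ΛC n j) atTop atTop) :
    Tendsto (fun n => (G + Matrix.diagonal (Sum.elim (ΛS n) (ΛC n)))⁻¹) atTop
      (nhds (Matrix.fromBlocks (G.toBlocks₁₁)⁻¹ 0 0 0)) := by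
  set G11 := G.toBlocks₁₁ with hG11def
  set B := G.toBlocks₁₂ with hBdef
  set C := G.toBlocks₂₁ with hCdef
  set G22 := G.toBlocks₂₂ with hG22def
  set A11 : ℕ → Matrix (Fin s) (Fin s) ℝ := fun n => G11 + diagonal (ΛS n) with hA11def
  set D : ℕ → Matrix (Fin t) (Fin t) ℝ := fun n => G22 + diagonal (ΛC n) with hDdef
  set Sc : ℕ → Matrix (Fin s) (Fin s) ℝ := fun n => A11 n - B * (D n)⁻¹ * C with hScdef
  -- positive definiteness facts
  have hG22psd : G22.PosSemidef := hG.posSemidef.submatrix Sum.inr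
  have hG11pd : G11.PosDef := posDef_toBlocks₁₁' hG
  have hDpd : ∀ n, (D n).PosDef := fun n =>
    Matrix.PosDef.posSemidef_add hG22psd (Matrix.PosDef.diagonal (hposC n))
  have hApd : ∀ n, (G + diagonal (Sum.elim (ΛS n) (ΛC n))).PosDef := fun n =>
    Matrix.PosDef.add_posSemidef hG
      (Matrix.PosDef.diagonal (fun i => by cases i with
        | inl i => exact hposS n i
        | inr j => exact hposC n j)).posSemidef
  -- block decomposition
  have hblocks : ∀ n, G + diagonal (Sum.elim (ΛS n) (ΛC n))
      = fromBlocks (A11 n) B C (D n) := by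
    intro n
    conv_lhs => rw [← fromBlocks_toBlocks G, ← fromBlocks_diagonal, fromBlocks_add]
    simp [hA11def, hDdef]
    exact ⟨rfl, rfl, rfl, rfl⟩
  -- key formula for the inverse
  have key : ∀ n, (G + diagonal (Sum.elim (ΛS n) (ΛC n)))⁻¹
      = fromBlocks (Sc n)⁻¹ (-((Sc n)⁻¹ * B * (D n)⁻¹)) (-((D n)⁻¹ * C * (Sc n)⁻¹))
          ((D n)⁻¹ + (D n)⁻¹ * C * (Sc n)⁻¹ * B * (D n)⁻¹) := by
    intro n
    letI iD : Invertible (D n) := (hDpd n).isUnit.invertible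
    letI iA : Invertible (fromBlocks (A11 n) B C (D n)) := by
      rw [← hblocks n]; exact (hApd n).isUnit.invertible
    letI iS0 : Invertible (A11 n - B * ⅟(D n) * C) :=
      invertibleOfFromBlocks₂₂Invertible (A11 n) B C (D n)
    have hDinv : ⅟(D n) = (D n)⁻¹ := invOf_eq_nonsing_inv (D n)
    letI iS : Invertible (A11 n - B * (D n)⁻¹ * C) := hDinv ▸ iS0
    rw [hblocks n, ← invOf_eq_nonsing_inv, invOf_fromBlocks₂₂_eq]
    simp only [invOf_eq_nonsing_inv, hScdef]
  -- convergence of D⁻¹ to 0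
  have hDinv0 : Tendsto (fun n => (D n)⁻¹) atTop (nhds (0 : Matrix (Fin t) (Fin t) ℝ)) := by
    apply tendsto_pi_nhds.mpr
    intro j
    rw [tendsto_pi_nhds]
    intro k
    haveI : Nonempty (Fin t) := ⟨j⟩
    set c : ℕ → ℝ := fun n => Finset.univ.inf' Finset.univ_nonempty (ΛC n) with hcdef
    have hcpos : ∀ n, 0 < c n := fun n => by
      rw [hcdef, Finset.lt_inf'_iff]
      exact fun i _ => hposC n i
    have hctop : Tendsto c atTop atTop := by
      rw [tendsto_atTop]
      intro b
      have hev : ∀ᶠ n in atTop, ∀ jj : Fin t, b ≤ ΛC n jj :=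
        Filter.eventually_all.mpr fun jj => (hC jj).eventually_ge_atTop b
      filter_upwards [hev] with n hn
      exact Finset.le_inf' _ _ fun jj _ => hn jj
    have hbound : ∀ n, |(D n)⁻¹ j k| ≤ 1 / c n := by
      intro n
      refine inv_entry_le' (hDpd n).det_pos.ne'.isUnit (hcpos n) ?_ k j
      intro x
      have h0 : (0 : ℝ) ≤ x ⬝ᵥ G22 *ᵥ x := by
        simpa using hG22psd.dotProduct_mulVec_nonneg x
      have hD : x ⬝ᵥ (D n) *ᵥ x = x ⬝ᵥ G22 *ᵥ x + ∑ i, ΛC n i * x i ^ 2 := by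
        rw [hDdef]
        simp only [add_mulVec, dotProduct_add]
        congr 1
        simp only [dotProduct, mulVec_diagonal, sq]
        exact Finset.sum_congr rfl fun i _ => by ring
      rw [hD, Finset.mul_sum]
      refine le_add_of_nonneg_of_le h0 (Finset.sum_le_sum fun i _ => ?_)
      exact mul_le_mul_of_nonneg_right (Finset.inf'_le _ (Finset.mem_univ i)) (sq_nonneg _)
    have hc0 : Tendsto (fun n => 1 / c n) atTop (nhds 0) := by
      simpa [one_div, Function.comp_def] using tendsto_inv_atTop_zero.comp hctop
    have : Tendsto (fun n => (D n)⁻¹ j k) atTop (nhds 0) :=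
      squeeze_zero_norm (fun n => by simpa [Real.norm_eq_abs] using hbound n) hc0
    simpa using this
  -- convergence of the diagonal perturbation on S
  have hdiagS : Tendsto (fun n => diagonal (ΛS n)) atTop
      (nhds (0 : Matrix (Fin s) (Fin s) ℝ)) := by
    apply tendsto_pi_nhds.mpr
    intro i
    rw [tendsto_pi_nhds]
    intro j
    by_cases hij : i = j
    · subst hij
      simpa [diagonal_apply_eq] using hS i
    · simpa [diagonal_apply_ne _ hij] using tendsto_const_nhds
  have hA11lim : Tendsto A11 atTop (nhds G11) := by
    have := (tendsto_const_nhds (x := G11) (f := atTop)).add hdiagS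
    simpa using this
  have hSclim : Tendsto Sc atTop (nhds G11) := by
    have hmul : Tendsto (fun n => B * (D n)⁻¹ * C) atTop (nhds (B * (0 : Matrix (Fin t) (Fin t) ℝ) * C)) :=
      tendsto_matrix_mul' (tendsto_matrix_mul' (tendsto_const_nhds (x := B)) hDinv0) (tendsto_const_nhds (x := C))
    have := hA11lim.sub hmul
    simpa using this
  have hScinv : Tendsto (fun n => (Sc n)⁻¹) atTop (nhds G11⁻¹) :=
    tendsto_matrix_inv' hSclim hG11pd.det_pos.ne'
  -- assemble
  have hmain : Tendsto (fun n => fromBlocks (Sc n)⁻¹ (-((Sc n)⁻¹ * B * (D n)⁻¹))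
      (-((D n)⁻¹ * C * (Sc n)⁻¹)) ((D n)⁻¹ + (D n)⁻¹ * C * (Sc n)⁻¹ * B * (D n)⁻¹)) atTop
      (nhds (fromBlocks G11⁻¹ 0 0 0)) := by
    have h12 : Tendsto (fun n => -((Sc n)⁻¹ * B * (D n)⁻¹)) atTop
        (nhds (0 : Matrix (Fin s) (Fin t) ℝ)) := by
      have := (tendsto_matrix_mul' (tendsto_matrix_mul' hScinv (tendsto_const_nhds (x := B))) hDinv0).neg
      simpa using this
    have h21 : Tendsto (fun n => -((D n)⁻¹ * C * (Sc n)⁻¹)) atTop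
        (nhds (0 : Matrix (Fin t) (Fin s) ℝ)) := by
      have := (tendsto_matrix_mul' (tendsto_matrix_mul' hDinv0 (tendsto_const_nhds (x := C))) hScinv).neg
      simpa using this
    have h22 : Tendsto (fun n => (D n)⁻¹ + (D n)⁻¹ * C * (Sc n)⁻¹ * B * (D n)⁻¹) atTop
        (nhds (0 : Matrix (Fin t) (Fin t) ℝ)) := by
      have := hDinv0.add (tendsto_matrix_mul' (tendsto_matrix_mul'
        (tendsto_matrix_mul' (tendsto_matrix_mul' hDinv0 (tendsto_const_nhds (x := C))) hScinv)
        (tendsto_const_nhds (x := B))) hDinv0)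
      simpa using this
    exact tendsto_fromBlocks' hScinv h12 h21 h22
  refine hmain.congr fun n => (key n).symm
end

section
/- Let Γ be a symmetric positive definite n×n matrix and Λ̄ a nonzero symmetric positive semidefinite n×n matrix. Then for any vector v in the column space of Λ̄ with Λ̄ v = μ v for some eigenvalue μ > 0, the quadratic form satisfies vᵀ (Γ⁻¹ − (Γ+Λ̄)⁻¹ Γ (Γ+Λ̄)⁻¹) v > 0; i.e. asymptotic variance reduction of the ridge estimator is strict along directions with nonzero asymptotic shrinkage. -/
open Matrix

private lemma symm_dot {n : ℕ} {M : Matrix (Fin n) (Fin n) ℝ} (hM : M.IsHermitian)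
    (u w : Fin n → ℝ) : u ⬝ᵥ (M *ᵥ w) = (M *ᵥ u) ⬝ᵥ w := by
  rw [dotProduct_mulVec, ← mulVec_transpose]
  congr 1
  have : Mᵀ = M := by
    have := hM.eq
    rwa [conjTranspose_eq_transpose_of_trivial] at this
  rw [this]

/-- For `Γ ≻ 0`, `Λ̄ ⪰ 0` symmetric, and `v` a unit eigenvector of
`Λ̄` with eigenvalue `μ > 0`, the quadratic form of
`Γ⁻¹ − (Γ+Λ̄)⁻¹ Γ (Γ+Λ̄)⁻¹` at `v` is strictly positive. -/
theorem strict_variance_reduction {n : ℕ}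
    (Γ L : Matrix (Fin n) (Fin n) ℝ) (hΓ : Γ.PosDef) (hL : L.PosSemidef)
    (v : Fin n → ℝ) (μ : ℝ) (hμ : 0 < μ) (hv : L *ᵥ v = μ • v)
    (hnorm : ‖(WithLp.equiv 2 (Fin n → ℝ)).symm v‖ = 1) :
    0 < v ⬝ᵥ ((Γ⁻¹ - (Γ + L)⁻¹ * Γ * (Γ + L)⁻¹) *ᵥ v) := by
  have hv0 : v ≠ 0 := by
    intro h
    rw [h] at hnorm
    simp at hnorm
  set A := Γ + L with hAdef
  have hA : A.PosDef := hΓ.add_posSemidef hL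
  have hAdet : IsUnit A.det := hA.det_pos.ne'.isUnit
  have hΓdet : IsUnit Γ.det := hΓ.det_pos.ne'.isUnit
  set w := A⁻¹ *ᵥ v with hwdef
  have hAw : A *ᵥ w = v := by
    rw [hwdef, mulVec_mulVec, Matrix.mul_nonsing_inv A hAdet, one_mulVec]
  have hveq : v = Γ *ᵥ w + L *ᵥ w := by
    rw [← hAw, hAdef, add_mulVec]
  -- inverse of Γ applied to v
  have hΓinvv : Γ⁻¹ *ᵥ v = w + Γ⁻¹ *ᵥ (L *ᵥ w) := by
    rw [hveq, mulVec_add, mulVec_mulVec, Matrix.nonsing_inv_mul Γ hΓdet, one_mulVec]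
  -- the second term equals w ⬝ Γ w
  have hterm2 : v ⬝ᵥ ((A⁻¹ * Γ * A⁻¹) *ᵥ v) = w ⬝ᵥ (Γ *ᵥ w) := by
    rw [← mulVec_mulVec, ← mulVec_mulVec, symm_dot hA.isHermitian.inv, ← hwdef]
  have hΓiΓw : Γ⁻¹ *ᵥ (Γ *ᵥ w) = w := by
    rw [mulVec_mulVec, Matrix.nonsing_inv_mul Γ hΓdet, one_mulVec]
  -- first term
  have hterm1 : v ⬝ᵥ (Γ⁻¹ *ᵥ v)
      = w ⬝ᵥ (Γ *ᵥ w) + 2 * (w ⬝ᵥ (L *ᵥ w)) + (L *ᵥ w) ⬝ᵥ (Γ⁻¹ *ᵥ (L *ᵥ w)) := by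
    rw [hΓinvv]
    nth_rewrite 1 [hveq]
    rw [dotProduct_add, add_dotProduct, add_dotProduct]
    have h1 : (Γ *ᵥ w) ⬝ᵥ w = w ⬝ᵥ (Γ *ᵥ w) := (symm_dot hΓ.isHermitian w w).symm
    have h2 : (L *ᵥ w) ⬝ᵥ w = w ⬝ᵥ (L *ᵥ w) := (symm_dot hL.isHermitian w w).symm
    have h3 : (Γ *ᵥ w) ⬝ᵥ (Γ⁻¹ *ᵥ (L *ᵥ w)) = w ⬝ᵥ (L *ᵥ w) := by
      rw [symm_dot hΓ.isHermitian.inv, hΓiΓw]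
    rw [h1, h2, h3]
    ring
  have key : v ⬝ᵥ ((Γ⁻¹ - A⁻¹ * Γ * A⁻¹) *ᵥ v)
      = 2 * (w ⬝ᵥ (L *ᵥ w)) + (L *ᵥ w) ⬝ᵥ (Γ⁻¹ *ᵥ (L *ᵥ w)) := by
    rw [sub_mulVec, dotProduct_sub, hterm1, hterm2]
    ring
  rw [key]
  have hLw : L *ᵥ w ≠ 0 := by
    intro hzero
    have hvΓw : v = Γ *ᵥ w := by rw [hveq, hzero, add_zero]
    have hwv : w = Γ⁻¹ *ᵥ v := by rw [hvΓw, hΓiΓw]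
    have h0 : v ⬝ᵥ (L *ᵥ w) = 0 := by rw [hzero, dotProduct_zero]
    rw [symm_dot hL.isHermitian, hv, smul_dotProduct, hwv] at h0
    have hpos : 0 < v ⬝ᵥ (Γ⁻¹ *ᵥ v) := by
      have := hΓ.inv.dotProduct_mulVec_pos hv0
      rwa [star_trivial] at this
    rw [smul_eq_mul] at h0
    linarith [mul_pos hμ hpos]
  have h2pos : 0 < (L *ᵥ w) ⬝ᵥ (Γ⁻¹ *ᵥ (L *ᵥ w)) := by
    have := hΓ.inv.dotProduct_mulVec_pos hLw
    rwa [star_trivial] at this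
  have h1nn : 0 ≤ w ⬝ᵥ (L *ᵥ w) := by
    have := hL.dotProduct_mulVec_nonneg w
    rwa [star_trivial] at this
  linarith
end
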